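/- Let d ≥ 1, let p be a real number with 2 ≤ p < ∞, let c > 0, let x ∈ ℝ^d satisfy (∑_{i=1}^d |x_i|^p)^{1/p} ≤ c, and let ε ∈ {−1, +1}^d be a sign vector. Then ∑_{i=1}^d ( c/d^{1/p} − x_i ε_i ) ≥ (d^{1/p}/(2c)) · ∑_{i=1}^d ( c/d^{1/p} − x_i ε_i )². -/

import Mathlib

/-- Lemma 4 (quadratic-lower-bound trick): for `2 ≤ p < ∞`, `c > 0`, `x` in the
`L^p` ball of radius `c`, and a sign vector `ε ∈ {−1,+1}^d`,
`∑ i (c/d^{1/p} − x_i ε_i) ≥ (d^{1/p}/(2c)) ∑ i (c/d^{1/p} − x_i ε_i)²`. -/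
theorem lp_quadratic_trick (d : ℕ) (hd : 1 ≤ d) (p c : ℝ)
    (hp : 2 ≤ p) (hc : 0 < c)
    (x : Fin d → ℝ) (hx : (∑ i, |x i| ^ p) ^ (1 / p) ≤ c)
    (ε : Fin d → ℝ) (hε : ∀ i, ε i = 1 ∨ ε i = -1) :
    ∑ i, (c / (d : ℝ) ^ (1 / p) - x i * ε i) ≥
      ((d : ℝ) ^ (1 / p) / (2 * c)) *
        ∑ i, (c / (d : ℝ) ^ (1 / p) - x i * ε i) ^ 2 := by
  have hppos : (0:ℝ) < p := by linarith
  have hdpos : (0:ℝ) < (d:ℝ) := by exact_mod_cast Nat.pos_of_ne_zero (by omega)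
  have hdp : (0:ℝ) < (d:ℝ) ^ (1/p) := Real.rpow_pos_of_pos hdpos _
  -- sum of |x|^p ≤ c^p
  have hsum_nonneg : (0:ℝ) ≤ ∑ i, |x i| ^ p :=
    Finset.sum_nonneg fun i _ => Real.rpow_nonneg (abs_nonneg _) _
  have hsum : ∑ i, |x i| ^ p ≤ c ^ p := by
    have := Real.rpow_le_rpow (Real.rpow_nonneg hsum_nonneg _) hx hppos.le
    rwa [← Real.rpow_mul hsum_nonneg, one_div_mul_cancel hppos.ne',
      Real.rpow_one] at this
  -- key: ∑ x_i² ≤ c² * d^(1 - 2/p)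
  have key : ∑ i, x i ^ 2 ≤ c ^ 2 * (d:ℝ) ^ (1 - 2/p) := by
    rcases eq_or_lt_of_le hp with hp2 | hp2
    · have : ∑ i, x i ^ 2 ≤ c ^ 2 := by
        calc ∑ i, x i ^ 2 = ∑ i, |x i| ^ p := by
              refine Finset.sum_congr rfl fun i _ => ?_
              rw [← hp2, show ((2:ℝ) = ((2:ℕ):ℝ)) by norm_num, Real.rpow_natCast,
                sq_abs]
          _ ≤ c ^ p := hsum
          _ = c ^ 2 := by
              rw [← hp2, show ((2:ℝ) = ((2:ℕ):ℝ)) by norm_num, Real.rpow_natCast]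
      calc ∑ i, x i ^ 2 ≤ c ^ 2 := this
        _ = c ^ 2 * (d:ℝ) ^ (1 - 2/p) := by
            rw [← hp2]; norm_num
    · -- Hölder with exponents p/2 and its conjugate
      have hconj : (p/2).HolderConjugate (1 / (1 - 2/p)) := by
        constructor
        · rw [one_div, inv_inv, inv_one]
          field_simp
          ring
        · linarith
        · have : 2/p < 1 := by rw [div_lt_one hppos]; exact hp2
          have : 0 < 1 - 2/p := by linarith
          positivity
      have hold := Real.inner_le_Lp_mul_Lq Finset.univ (fun i => x i ^ 2)
        (fun i => (1:ℝ)) hconj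
      simp only [mul_one, abs_one, Real.one_rpow, Finset.sum_const,
        Finset.card_univ, Fintype.card_fin, nsmul_eq_mul] at hold
      have habs : ∀ i : Fin d, |x i ^ 2| ^ (p/2) = |x i| ^ p := by
        intro i
        rw [abs_pow, ← Real.rpow_natCast |x i| 2, ← Real.rpow_mul (abs_nonneg _)]
        push_cast
        congr 1
        ring
      rw [Finset.sum_congr rfl (fun i _ => habs i)] at hold
      have h1 : (∑ i, |x i| ^ p) ^ (1 / (p/2)) ≤ c ^ 2 := by
        have := Real.rpow_le_rpow hsum_nonneg hsum (by positivity : (0:ℝ) ≤ 1/(p/2))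
        refine this.trans_eq ?_
        rw [← Real.rpow_natCast c 2, ← Real.rpow_mul hc.le]
        congr 1
        field_simp
        norm_num
      have h2 : ((d:ℝ)) ^ (1 / (1 / (1 - 2/p))) = (d:ℝ) ^ (1 - 2/p) := by
        rw [one_div_one_div]
      rw [h2] at hold
      calc ∑ i, x i ^ 2 ≤ (∑ i, |x i| ^ p) ^ (1/(p/2)) * (d:ℝ) ^ (1 - 2/p) := hold
        _ ≤ c ^ 2 * (d:ℝ) ^ (1 - 2/p) := by
            apply mul_le_mul_of_nonneg_right h1 (Real.rpow_nonneg hdpos.le _)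
  -- set a = c / d^(1/p)
  set a : ℝ := c / (d:ℝ) ^ (1/p) with ha
  have hapos : 0 < a := div_pos hc hdp
  have hda : (d:ℝ) * a ^ 2 = c ^ 2 * (d:ℝ) ^ (1 - 2/p) := by
    rw [ha, div_pow, ← Real.rpow_natCast ((d:ℝ) ^ (1/p)) 2,
      ← Real.rpow_mul hdpos.le]
    rw [Real.rpow_sub hdpos, Real.rpow_one]
    push_cast
    rw [show 1/p * 2 = 2/p by ring]
    field_simp
  have hcoef : (d:ℝ) ^ (1/p) / (2 * c) = 1 / (2 * a) := by
    rw [ha]; field_simp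
  rw [hcoef, ge_iff_le, ← sub_nonneg]
  have hexp : ∀ i : Fin d, (a - x i * ε i) - 1/(2*a) * (a - x i * ε i)^2
      = 1/(2*a) * (a^2 - x i ^ 2) := by
    intro i
    rcases hε i with h | h <;> rw [h] <;> field_simp <;> ring
  calc (0:ℝ) ≤ 1/(2*a) * ((d:ℝ) * a^2 - ∑ i, x i ^ 2) := by
        apply mul_nonneg (by positivity)
        rw [sub_nonneg, hda]; exact key
    _ = ∑ i, ((a - x i * ε i) - 1/(2*a) * (a - x i * ε i)^2) := by
        rw [Finset.sum_congr rfl (fun i _ => hexp i), ← Finset.mul_sum,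
          Finset.sum_sub_distrib]
        simp [Finset.sum_const, Finset.card_univ, nsmul_eq_mul]
    _ = ∑ i, (a - x i * ε i) - 1/(2*a) * ∑ i, (a - x i * ε i)^2 := by
        rw [Finset.sum_sub_distrib, Finset.mul_sum]
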